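/- Let $(p_j)$ be positive, non-increasing, summable frequencies with $\liminf_{j\to\infty} p_{j+1}/p_j \ge 1/2$. Then $\liminf_{t\to\infty} V(t) \ge 1$, where $V(t) = \sum_j (e^{-tp_j} - e^{-2tp_j})$. -/

import Mathlib

open Real Filter

private lemma exp_sub_exp_le' {a b : ℝ} (h : a ≤ b) :
    Real.exp (-a) - Real.exp (-b) ≤ (b - a) * Real.exp (-a) := by
  have h1 : Real.exp (-b) = Real.exp (-a) * Real.exp (a - b) := by
    rw [← Real.exp_add]; ring_nf
  have h2 := mul_le_mul_of_nonneg_left (Real.add_one_le_exp (a - b)) (Real.exp_pos (-a)).le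
  nlinarith [Real.exp_pos (-a)]

private lemma exp_sub_exp_ge' {a b : ℝ} (h : a ≤ b) :
    (b - a) * Real.exp (-b) ≤ Real.exp (-a) - Real.exp (-b) := by
  have h1 : Real.exp (-a) = Real.exp (-b) * Real.exp (b - a) := by
    rw [← Real.exp_add]; ring_nf
  have h2 := mul_le_mul_of_nonneg_left (Real.add_one_le_exp (b - a)) (Real.exp_pos (-b)).le
  nlinarith [Real.exp_pos (-b)]

private lemma key_ineq {δ w u : ℝ} (hδ0 : 0 < δ) (hδ1 : δ ≤ 1) (hw : 0 < w)
    (hwu : w ≤ u) (hu : u ≤ (2 + δ) * w) :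
    Real.exp (-(2 * w)) - Real.exp (-u) ≤
      2 * δ * (Real.exp (-(w / 2)) - Real.exp (-(u / 2))) := by
  rcases le_or_gt u (2 * w) with h | h
  · have h1 : Real.exp (-(2 * w)) ≤ Real.exp (-u) := Real.exp_le_exp.mpr (by linarith)
    have h2 : Real.exp (-(u / 2)) ≤ Real.exp (-(w / 2)) := Real.exp_le_exp.mpr (by linarith)
    nlinarith
  · have hL : Real.exp (-(2 * w)) - Real.exp (-u) ≤ (u - 2 * w) * Real.exp (-(2 * w)) :=
      exp_sub_exp_le' (by linarith)
    have hR : (u / 2 - w / 2) * Real.exp (-(u / 2)) ≤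
        Real.exp (-(w / 2)) - Real.exp (-(u / 2)) := exp_sub_exp_ge' (by linarith)
    have hmono : Real.exp (-(2 * w)) ≤ Real.exp (-(u / 2)) :=
      Real.exp_le_exp.mpr (by nlinarith)
    have hpos := (Real.exp_pos (-(u / 2))).le
    have hpos2 := (Real.exp_pos (-(2 * w))).le
    have e1 : (u - 2 * w) * Real.exp (-(2 * w)) ≤ δ * w * Real.exp (-(2 * w)) :=
      mul_le_mul_of_nonneg_right (by nlinarith) hpos2
    have e2 : δ * w * Real.exp (-(2 * w)) ≤ δ * w * Real.exp (-(u / 2)) :=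
      mul_le_mul_of_nonneg_left hmono (by nlinarith)
    have e3 : δ * w * Real.exp (-(u / 2)) ≤ δ * (u - w) * Real.exp (-(u / 2)) :=
      mul_le_mul_of_nonneg_right (by nlinarith) hpos
    have e4 : 2 * δ * ((u / 2 - w / 2) * Real.exp (-(u / 2))) ≤
        2 * δ * (Real.exp (-(w / 2)) - Real.exp (-(u / 2))) :=
      mul_le_mul_of_nonneg_left hR (by nlinarith)
    have e5 : δ * (u - w) * Real.exp (-(u / 2)) =
        2 * δ * ((u / 2 - w / 2) * Real.exp (-(u / 2))) := by ring
    linarith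

theorem stmt13 (p : ℕ → ℝ) (hpos : ∀ j, 0 < p j) (hmono : ∀ j, p (j + 1) ≤ p j)
    (hsum : Summable p)
    (hratio : (1 : ℝ) / 2 ≤ Filter.liminf (fun j : ℕ => p (j + 1) / p j) atTop)
    (V : ℝ → ℝ)
    (hV : ∀ t : ℝ, V t = ∑' j : ℕ, (Real.exp (-(t * p j)) - Real.exp (-(2 * t * p j)))) :
    (1 : EReal) ≤ Filter.liminf (fun t : ℝ => ((V t : ℝ) : EReal)) atTop := by
  -- Main real-valued estimate
  have main : ∀ r : ℝ, r < 1 → ∀ᶠ t in (atTop : Filter ℝ), r < V t := by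
    intro r hr
    set η : ℝ := 1 - r with hη
    have hη0 : 0 < η := by linarith
    set δ : ℝ := min 1 (η / 4) with hδ
    have hδ0 : 0 < δ := lt_min one_pos (by linarith)
    have hδ1 : δ ≤ 1 := min_le_left _ _
    have hδη : 2 * δ ≤ η / 2 := by
      have := min_le_right 1 (η / 4); simp only [hδ]; linarith
    -- eventual ratio bound
    have hlt : 1 / (2 + δ) < 1 / 2 := by
      rw [div_lt_div_iff₀ (by linarith) (by norm_num)]; linarith
    have hb : Filter.IsBoundedUnder (· ≥ ·) atTop (fun j : ℕ => p (j + 1) / p j) :=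
      Filter.isBoundedUnder_of ⟨0, fun j => (div_pos (hpos _) (hpos _)).le⟩
    have hev : ∀ᶠ j in atTop, 1 / (2 + δ) < p (j + 1) / p j :=
      Filter.eventually_lt_of_lt_liminf (lt_of_lt_of_le hlt hratio) hb
    obtain ⟨J, hJ⟩ := Filter.eventually_atTop.mp hev
    have hratJ : ∀ j, J ≤ j → p j ≤ (2 + δ) * p (j + 1) := by
      intro j hj
      have h1 := hJ j hj
      rw [div_lt_div_iff₀ (by linarith) (hpos j)] at h1
      nlinarith [hpos (j + 1)]
    -- key bound: for every t > 0, V t ≥ 1 - 2δ - exp (-(t * p J))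
    have hbound : ∀ t : ℝ, 0 < t → 1 - 2 * δ - Real.exp (-(t * p J)) ≤ V t := by
      intro t ht
      set a : ℕ → ℝ := fun j => Real.exp (-(t * p j)) - Real.exp (-(2 * t * p j)) with ha
      have hanon : ∀ j, 0 ≤ a j := by
        intro j
        have h1 : Real.exp (-(2 * t * p j)) ≤ Real.exp (-(t * p j)) :=
          Real.exp_le_exp.mpr (by nlinarith [hpos j])
        simp only [ha]; linarith
      have hale : ∀ j, a j ≤ t * p j := by
        intro j
        have h1 : Real.exp (-(t * p j)) - Real.exp (-(2 * t * p j)) ≤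
            (2 * t * p j - t * p j) * Real.exp (-(t * p j)) :=
          exp_sub_exp_le' (by nlinarith [hpos j])
        have h2 : Real.exp (-(t * p j)) ≤ 1 :=
          Real.exp_le_one_iff.mpr (by nlinarith [hpos j])
        have h3 : 0 ≤ t * p j := (mul_pos ht (hpos j)).le
        simp only [ha]
        nlinarith [(Real.exp_pos (-(t * p j))).le]
      have hsummable : Summable a :=
        Summable.of_nonneg_of_le hanon hale (hsum.mul_left t)
      set C : ℝ := Real.exp (-(t * p J)) - 2 * δ * Real.exp (-(t * p J / 2)) with hC
      -- induction: telescoping with potential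
      have hind : ∀ m : ℕ,
          Real.exp (-(t * p (J + m))) - 2 * δ * Real.exp (-(t * p (J + m) / 2)) - C ≤
            ∑ j ∈ Finset.range m, a (J + 1 + j) := by
        intro m
        induction m with
        | zero => simp [hC]
        | succ n ih =>
          rw [Finset.sum_range_succ]
          have hidx : J + 1 + n = J + (n + 1) := by omega
          rw [hidx]
          have hw : 0 < t * p (J + (n + 1)) := mul_pos ht (hpos _)
          have hwu : t * p (J + (n + 1)) ≤ t * p (J + n) := by
            have := hmono (J + n)
            have h' : p (J + (n + 1)) ≤ p (J + n) := by
              have : J + (n + 1) = (J + n) + 1 := by omega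
              rw [this]; exact hmono (J + n)
            nlinarith
          have hu : t * p (J + n) ≤ (2 + δ) * (t * p (J + (n + 1))) := by
            have h' : p (J + n) ≤ (2 + δ) * p ((J + n) + 1) :=
              hratJ (J + n) (Nat.le_add_right _ _)
            have hidx2 : (J + n) + 1 = J + (n + 1) := by omega
            rw [hidx2] at h'
            nlinarith
          have hk := key_ineq hδ0 hδ1 hw hwu hu
          rw [← mul_assoc] at hk
          have hstep : Real.exp (-(t * p (J + (n + 1)))) -
              2 * δ * Real.exp (-(t * p (J + (n + 1)) / 2)) -
              (Real.exp (-(t * p (J + n))) - 2 * δ * Real.exp (-(t * p (J + n) / 2))) ≤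
              a (J + (n + 1)) := by
            simp only [ha]
            linarith
          linarith
      -- each partial sum is at most V t
      have hpart : ∀ m : ℕ, ∑ j ∈ Finset.range m, a (J + 1 + j) ≤ V t := by
        intro m
        have heq : ∑ j ∈ Finset.range m, a (J + 1 + j) =
            ∑ j ∈ Finset.Ico (J + 1) (J + 1 + m), a j := by
          rw [Finset.sum_Ico_eq_sum_range, Nat.add_sub_cancel_left]
        rw [heq, hV t]
        exact Summable.sum_le_tsum _ (fun j _ => hanon j) hsummable
      -- take the limit m → ∞
      have hq : Tendsto (fun m : ℕ => p (J + m)) atTop (nhds 0) := by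
        have h1 : Tendsto (fun m : ℕ => J + m) atTop atTop :=
          tendsto_atTop_mono (fun m => Nat.le_add_left m J) tendsto_id
        exact hsum.tendsto_atTop_zero.comp h1
      have hg : Continuous (fun x : ℝ =>
          Real.exp (-(t * x)) - 2 * δ * Real.exp (-(t * x / 2))) := by
        have c1 : Continuous (fun x : ℝ => Real.exp (-(t * x))) :=
          Real.continuous_exp.comp (continuous_const.mul continuous_id).neg
        have c2 : Continuous (fun x : ℝ => Real.exp (-(t * x / 2))) :=
          Real.continuous_exp.comp ((continuous_const.mul continuous_id).div_const 2).neg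
        exact c1.sub (continuous_const.mul c2)
      have hF : Tendsto (fun m : ℕ =>
          Real.exp (-(t * p (J + m))) - 2 * δ * Real.exp (-(t * p (J + m) / 2)))
          atTop (nhds (1 - 2 * δ)) := by
        have h1 := (hg.tendsto 0).comp hq
        simp only [Function.comp_def] at h1
        norm_num at h1
        convert h1 using 2 <;> norm_num
      have hlim : 1 - 2 * δ ≤ V t + C := by
        apply le_of_tendsto hF
        filter_upwards with m
        have := hind m
        have := hpart m
        linarith
      have hCnn : 0 ≤ 2 * δ * Real.exp (-(t * p J / 2)) := by positivity
      simp only [hC] at hlim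
      linarith
    -- conclude eventual bound
    have htend : Tendsto (fun t : ℝ => Real.exp (-(t * p J))) atTop (nhds 0) := by
      apply Real.tendsto_exp_atBot.comp
      have h1 : Tendsto (fun t : ℝ => t * p J) atTop atTop :=
        Tendsto.atTop_mul_const (hpos J) tendsto_id
      exact (tendsto_neg_atBot_iff.mpr h1)
    have hev2 : ∀ᶠ t : ℝ in atTop, Real.exp (-(t * p J)) < η / 2 :=
      htend.eventually_lt_const (by linarith)
    filter_upwards [hev2, eventually_gt_atTop (0 : ℝ)] with t h1 h2
    have := hbound t h2
    simp only [hη] at *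
    linarith
  -- transfer to EReal liminf
  have h2 : ∀ r : ℝ, r < 1 →
      (r : EReal) ≤ Filter.liminf (fun t : ℝ => ((V t : ℝ) : EReal)) atTop := by
    intro r hr
    apply Filter.le_liminf_of_le (by isBoundedDefault)
    filter_upwards [main r hr] with t ht
    exact_mod_cast ht.le
  by_contra hcon
  push_neg at hcon
  have h0 : ((0 : ℝ) : EReal) ≤ Filter.liminf (fun t : ℝ => ((V t : ℝ) : EReal)) atTop :=
    h2 0 (by norm_num)
  obtain ⟨r, hr1, hr2⟩ := EReal.exists_between_coe_real hcon
  have hr3 : r < 1 := by exact_mod_cast (by exact_mod_cast hr2 : ((r : ℝ) : EReal) < ((1 : ℝ) : EReal))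
  exact absurd (h2 r hr3) (not_le.mpr hr1)
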